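/- Let X ⊆ R^d be compact and f : X → R lower semicontinuous. Let f̃ be its convexification defined by f̃(x) = min { Σ_{k=1}^{d+1} α^k f(z^k) : α ∈ S_d, z^k ∈ X, Σ α^k z^k = x }. Then f̃ is convex and lower semicontinuous on conv(X), and epi(f̃) = closure(conv(epi(f))). -/

import Mathlib

open Finset

section Aux

/-! ### Auxiliary lemmas -/

lemma pack_sum {M : Type*} [AddCommMonoid M] {ι : Type*} (s : Finset ι) {n : ℕ}
    (h : s.card ≤ n) (g : ι → M) :
    ∑ k : Fin n, (if h' : (k : ℕ) < s.card then g (s.equivFin.symm ⟨(k : ℕ), h'⟩) else 0)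
      = ∑ j ∈ s, g j := by
  have h1 : ∑ j ∈ s, g j = ∑ i : Fin s.card, g (s.equivFin.symm i) := by
    rw [← Finset.sum_coe_sort s g, ← Equiv.sum_comp s.equivFin.symm (fun j : {x // x ∈ s} => g j)]
  rw [h1, Fin.sum_univ_eq_sum_range
      (fun k => if h' : k < s.card then g (s.equivFin.symm ⟨k, h'⟩) else 0)]
  rw [show (∑ i : Fin s.card, g (s.equivFin.symm i))
      = ∑ k ∈ range s.card, (if h' : k < s.card then g (s.equivFin.symm ⟨k, h'⟩) else 0) by
    rw [← Fin.sum_univ_eq_sum_range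
      (fun k => if h' : k < s.card then g (s.equivFin.symm ⟨k, h'⟩) else 0)]
    exact Fintype.sum_congr _ _ (fun i => by rw [dif_pos i.isLt])]
  exact (Finset.sum_subset (Finset.range_subset_range.2 h)
    (fun k _ hk => dif_neg (by simpa using hk))).symm

lemma exists_affine_relation {d : ℕ} {ι : Type*} [DecidableEq ι] (s : Finset ι)
    (z : ι → EuclideanSpace ℝ (Fin d)) (hcard : d + 2 ≤ s.card) :
    ∃ γ : ι → ℝ, ∑ j ∈ s, γ j = 0 ∧ ∑ j ∈ s, γ j • z j = 0 ∧ ∃ j ∈ s, γ j ≠ 0 := by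
  classical
  set L : ι → ℝ × EuclideanSpace ℝ (Fin d) := fun j => (1, z j) with hL
  by_cases hinj : Set.InjOn L s
  · set t : Finset (ℝ × EuclideanSpace ℝ (Fin d)) := s.image L with ht
    have htc : t.card = s.card := Finset.card_image_of_injOn hinj
    have hdim : Module.finrank ℝ (ℝ × EuclideanSpace ℝ (Fin d)) < t.card := by
      rw [htc, Module.finrank_prod, finrank_euclideanSpace_fin, Module.finrank_self]
      omega
    obtain ⟨g, hg0, e₀, he₀, hge₀⟩ := Module.exists_nontrivial_relation_of_finrank_lt_card hdim
    rw [ht, Finset.sum_image (fun x hx y hy => hinj hx hy)] at hg0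
    refine ⟨fun j => g (L j), ?_, ?_, ?_⟩
    · have h1 := congrArg Prod.fst hg0
      simpa [Prod.fst_sum, smul_eq_mul, hL] using h1
    · have h2 := congrArg Prod.snd hg0
      simpa [Prod.snd_sum, hL] using h2
    · obtain ⟨j, hj, hLj⟩ := Finset.mem_image.1 he₀
      exact ⟨j, hj, by simpa [hLj] using hge₀⟩
  · rw [Set.InjOn] at hinj
    push_neg at hinj
    obtain ⟨j₁, hj₁', j₂, hj₂', hLe, hne⟩ := hinj
    have hj₁ : j₁ ∈ s := hj₁'
    have hj₂ : j₂ ∈ s := hj₂'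
    have hz12 : z j₁ = z j₂ := congrArg Prod.snd hLe
    refine ⟨fun j => if j = j₁ then 1 else if j = j₂ then -1 else 0, ?_, ?_, ⟨j₁, hj₁, by simp⟩⟩
    · rw [Finset.sum_congr rfl (fun j _ => show (if j = j₁ then (1:ℝ) else if j = j₂ then -1 else 0)
        = (if j = j₁ then (1:ℝ) else 0) + (if j = j₂ then -1 else 0) by
          split_ifs with h1 h2 <;> simp_all), Finset.sum_add_distrib,
        Finset.sum_ite_eq' s j₁ (fun _ => (1:ℝ)), Finset.sum_ite_eq' s j₂ (fun _ => (-1:ℝ))]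
      simp [hj₁, hj₂]
    · rw [Finset.sum_congr rfl (fun j _ =>
        show (if j = j₁ then (1:ℝ) else if j = j₂ then -1 else 0) • z j
        = (if j = j₁ then z j₁ else 0) + (if j = j₂ then -(z j₂) else 0) by
          split_ifs with h1 h2 <;> simp_all), Finset.sum_add_distrib,
        Finset.sum_ite_eq' s j₁ (fun _ => z j₁), Finset.sum_ite_eq' s j₂ (fun _ => -(z j₂))]
      simp [hj₁, hj₂, hz12]

/-- lower semicontinuous functions attain their min on compact sets (metric spaces). -/
lemma lsc_exists_min {β : Type*} [PseudoMetricSpace β] {K : Set β} (hK : IsCompact K)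
    (hne : K.Nonempty) {g : β → ℝ} (hg : LowerSemicontinuousOn g K) :
    ∃ y ∈ K, ∀ y' ∈ K, g y ≤ g y' := by
  have hbdd : BddBelow (g '' K) := by
    by_contra hb
    rw [not_bddBelow_iff] at hb
    have : ∀ n : ℕ, ∃ y ∈ K, g y < -n := by
      intro n
      obtain ⟨v, ⟨y, hy, rfl⟩, hv⟩ := hb (-n)
      exact ⟨y, hy, hv⟩
    choose y hyK hylt using this
    obtain ⟨a, haK, φ, hφ, hconv⟩ := hK.tendsto_subseq hyK
    have htend : Filter.Tendsto (y ∘ φ) Filter.atTop (nhds a) := hconv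
    have hin : Filter.Tendsto (y ∘ φ) Filter.atTop (nhdsWithin a K) :=
      tendsto_nhdsWithin_iff.2 ⟨htend, Filter.Eventually.of_forall (fun n => hyK (φ n))⟩
    have hev : ∀ᶠ n in Filter.atTop, g a - 1 < g (y (φ n)) :=
      hin.eventually (hg a haK (g a - 1) (by linarith))
    have hev2 : ∀ᶠ n : ℕ in Filter.atTop, (1 - g a) ≤ (n : ℝ) :=
      Filter.Tendsto.eventually_ge_atTop tendsto_natCast_atTop_atTop _
    obtain ⟨n, hn1, hn2⟩ := (hev.and hev2).exists
    have h3 : g (y (φ n)) < -(φ n : ℝ) := hylt (φ n)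
    have h4 : (n : ℝ) ≤ (φ n : ℝ) := by exact_mod_cast hφ.le_apply
    linarith
  set c := sInf (g '' K) with hc
  have hmem : ∀ y' ∈ K, c ≤ g y' := fun y' hy' => csInf_le hbdd ⟨y', hy', rfl⟩
  have hseq : ∀ n : ℕ, ∃ y ∈ K, g y < c + 1 / (n + 1) := by
    intro n
    have h1 : c < c + 1 / (n + 1) := by
      have : (0:ℝ) < 1 / (n + 1) := by positivity
      linarith
    obtain ⟨v, ⟨y, hy, rfl⟩, hv⟩ := exists_lt_of_csInf_lt (hne.image g) h1
    exact ⟨y, hy, hv⟩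
  choose y hyK hylt using hseq
  obtain ⟨a, haK, φ, hφ, hconv⟩ := hK.tendsto_subseq hyK
  refine ⟨a, haK, fun y' hy' => ?_⟩
  have hga : g a ≤ c := by
    by_contra hcon
    push_neg at hcon
    obtain ⟨u, hu1, hu2⟩ := exists_between hcon
    have hin : Filter.Tendsto (y ∘ φ) Filter.atTop (nhdsWithin a K) :=
      tendsto_nhdsWithin_iff.2 ⟨hconv, Filter.Eventually.of_forall (fun n => hyK (φ n))⟩
    have hev : ∀ᶠ n in Filter.atTop, u < g (y (φ n)) :=
      hin.eventually (hg a haK u hu2)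
    have hev2 : ∀ᶠ n : ℕ in Filter.atTop, c + 1 / ((φ n : ℝ) + 1) ≤ u := by
      have hphi : Filter.Tendsto (fun n : ℕ => (φ n : ℝ) + 1) Filter.atTop Filter.atTop :=
        Filter.tendsto_atTop_add_const_right _ 1
          (tendsto_natCast_atTop_atTop.comp hφ.tendsto_atTop)
      have htend : Filter.Tendsto (fun n : ℕ => c + 1 / ((φ n : ℝ) + 1)) Filter.atTop
          (nhds (c + 0)) := by
        apply Filter.Tendsto.const_add
        simpa [one_div, Function.comp_def] using tendsto_inv_atTop_zero.comp hphi
      rw [add_zero] at htend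
      exact htend.eventually_le_const hu1
    obtain ⟨n, hn1, hn2⟩ := (hev.and hev2).exists
    have h5 := hylt (φ n)
    have h6 : g (y (φ n)) < u := lt_of_lt_of_le (by exact_mod_cast h5) hn2
    linarith
  exact le_trans hga (hmem y' hy')

lemma lsc_comp_proj {β γ : Type*} [TopologicalSpace β] [TopologicalSpace γ] {K : Set β}
    {X : Set γ} {π : β → γ} {f : γ → ℝ} (hf : LowerSemicontinuousOn f X)
    (hπ : Continuous π) (hmap : Set.MapsTo π K X) :
    LowerSemicontinuousOn (fun p => f (π p)) K := fun p hp c hc =>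
  (hπ.continuousWithinAt.tendsto_nhdsWithin hmap).eventually (hf (π p) (hmap hp) c hc)

lemma lsc_mul_nonneg {β : Type*} [TopologicalSpace β] {K : Set β} {u v : β → ℝ}
    (hu : ContinuousOn u K) (hu0 : ∀ y ∈ K, 0 ≤ u y) (hv : LowerSemicontinuousOn v K)
    (hv0 : ∀ y ∈ K, 0 ≤ v y) : LowerSemicontinuousOn (fun y => u y * v y) K := by
  intro y hy c hc
  rcases lt_or_ge c 0 with hc0 | hc0
  · filter_upwards [self_mem_nhdsWithin] with y' hy'
    exact lt_of_lt_of_le hc0 (mul_nonneg (hu0 y' hy') (hv0 y' hy'))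
  · have huv : 0 < u y * v y := lt_of_le_of_lt hc0 hc
    have hupos : 0 < u y := by
      rcases lt_or_eq_of_le (hu0 y hy) with h | h
      · exact h
      · exfalso; rw [← h, zero_mul] at huv; exact lt_irrefl _ huv
    have hvpos : 0 < v y := by nlinarith
    set ρ := c / (u y * v y) with hρ
    have hρ0 : 0 ≤ ρ := div_nonneg hc0 huv.le
    have hρ1 : ρ < 1 := (div_lt_one huv).2 hc
    set sσ := (ρ + 1) / 2 with hs
    have hs0 : 0 ≤ sσ := by linarith
    have hsρ : ρ < sσ := by linarith
    have hs1 : sσ < 1 := by linarith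
    set t := Real.sqrt sσ with htdef
    have ht2 : t ^ 2 = sσ := Real.sq_sqrt hs0
    have ht0 : 0 ≤ t := Real.sqrt_nonneg _
    have ht1 : t < 1 := by nlinarith
    have hu' : t * u y < u y := by nlinarith
    have hv' : t * v y < v y := by nlinarith
    have hkey : c < (t * u y) * (t * v y) := by
      have h1 : (t * u y) * (t * v y) = sσ * (u y * v y) := by
        have : t * u y * (t * v y) = t ^ 2 * (u y * v y) := by ring
        rw [this, ht2]
      rw [h1]
      have h2 : c = ρ * (u y * v y) := by
        rw [hρ, div_mul_cancel₀ _ (ne_of_gt huv)]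
      rw [h2]
      exact mul_lt_mul_of_pos_right hsρ huv
    filter_upwards [(hu y hy).eventually (eventually_gt_nhds hu'),
      hv y hy (t * v y) hv', self_mem_nhdsWithin] with y' h1 h2 hy'
    calc c < (t * u y) * (t * v y) := hkey
    _ < u y' * v y' := by
        apply mul_lt_mul'' h1 h2 (mul_nonneg ht0 hupos.le) (mul_nonneg ht0 hvpos.le)

end Aux

def convexifySet (d : ℕ) (X : Set (EuclideanSpace ℝ (Fin d)))
    (f : EuclideanSpace ℝ (Fin d) → ℝ) (x : EuclideanSpace ℝ (Fin d)) : Set ℝ :=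
  {r | ∃ (α : Fin (d + 1) → ℝ) (z : Fin (d + 1) → EuclideanSpace ℝ (Fin d)),
    (∀ k, 0 ≤ α k) ∧ (∑ k, α k = 1) ∧ (∀ k, z k ∈ X) ∧
    (∑ k, α k • z k = x) ∧ r = ∑ k, α k * f (z k)}

noncomputable def convexify (d : ℕ) (X : Set (EuclideanSpace ℝ (Fin d)))
    (f : EuclideanSpace ℝ (Fin d) → ℝ) (x : EuclideanSpace ℝ (Fin d)) : ℝ :=
  sInf (convexifySet d X f x)

section Main

variable {d : ℕ} {X : Set (EuclideanSpace ℝ (Fin d))} {f : EuclideanSpace ℝ (Fin d) → ℝ}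

lemma mem_convexifySet_of_finset {ι : Type*} (s : Finset ι) (β : ι → ℝ)
    (z : ι → EuclideanSpace ℝ (Fin d)) (h0 : ∀ j ∈ s, 0 ≤ β j) (h1 : ∑ j ∈ s, β j = 1)
    (hz : ∀ j ∈ s, z j ∈ X) (hcard : s.card ≤ d + 1) :
    (∑ j ∈ s, β j * f (z j)) ∈ convexifySet d X f (∑ j ∈ s, β j • z j) := by
  have hne : s.Nonempty := by
    rcases s.eq_empty_or_nonempty with h | h
    · exfalso; rw [h, Finset.sum_empty] at h1; exact one_ne_zero h1.symm
    · exact h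
  obtain ⟨j₀, hj₀⟩ := hne
  refine ⟨fun k => if h' : (k : ℕ) < s.card then β (s.equivFin.symm ⟨(k : ℕ), h'⟩) else 0,
    fun k => if h' : (k : ℕ) < s.card then z (s.equivFin.symm ⟨(k : ℕ), h'⟩) else z j₀,
    ?_, ?_, ?_, ?_, ?_⟩
  · intro k; dsimp only; split_ifs with h'
    · exact h0 _ (Finset.coe_mem _)
    · exact le_refl 0
  · rw [pack_sum s hcard β]; exact h1
  · intro k; dsimp only; split_ifs with h'
    · exact hz _ (Finset.coe_mem _)
    · exact hz _ hj₀
  · rw [show (∑ k : Fin (d+1),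
        (if h' : (k : ℕ) < s.card then β (s.equivFin.symm ⟨(k : ℕ), h'⟩) else 0) •
        (if h' : (k : ℕ) < s.card then z (s.equivFin.symm ⟨(k : ℕ), h'⟩) else z j₀))
      = ∑ k : Fin (d+1), (if h' : (k : ℕ) < s.card then
          (fun j => β j • z j) (s.equivFin.symm ⟨(k : ℕ), h'⟩) else 0) from
      Fintype.sum_congr _ _ (fun k => by by_cases h' : (k : ℕ) < s.card <;> simp [h'])]
    rw [pack_sum s hcard (fun j => β j • z j)]
  · rw [show (∑ k : Fin (d+1),
        (if h' : (k : ℕ) < s.card then β (s.equivFin.symm ⟨(k : ℕ), h'⟩) else 0) *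
        f (if h' : (k : ℕ) < s.card then z (s.equivFin.symm ⟨(k : ℕ), h'⟩) else z j₀))
      = ∑ k : Fin (d+1), (if h' : (k : ℕ) < s.card then
          (fun j => β j * f (z j)) (s.equivFin.symm ⟨(k : ℕ), h'⟩) else 0) from
      Fintype.sum_congr _ _ (fun k => by by_cases h' : (k : ℕ) < s.card <;> simp [h'])]
    rw [pack_sum s hcard (fun j => β j * f (z j))]

lemma reduce_aux :
    ∀ (n : ℕ) {ι : Type} [DecidableEq ι] (s : Finset ι) (β : ι → ℝ)
      (z : ι → EuclideanSpace ℝ (Fin d)), s.card ≤ n → (∀ j ∈ s, 0 < β j) →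
      (∑ j ∈ s, β j = 1) → (∀ j ∈ s, z j ∈ X) →
      ∃ r ∈ convexifySet d X f (∑ j ∈ s, β j • z j), r ≤ ∑ j ∈ s, β j * f (z j) := by
  intro n
  induction n with
  | zero =>
    intro ι _ s β z hcard h0 h1 hz
    exfalso
    rw [Finset.card_eq_zero.1 (Nat.le_zero.1 hcard), Finset.sum_empty] at h1
    exact one_ne_zero h1.symm
  | succ n ih =>
    intro ι _ s β z hcard h0 h1 hz
    by_cases hc : s.card ≤ d + 1
    · exact ⟨∑ j ∈ s, β j * f (z j),
        mem_convexifySet_of_finset s β z (fun j hj => (h0 j hj).le) h1 hz hc, le_refl _⟩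
    · push_neg at hc
      obtain ⟨γ, hγ1, hγ2, jne, hjne, hγne⟩ := exists_affine_relation s z hc
      set σ : ι → ℝ := if 0 ≤ ∑ j ∈ s, γ j * f (z j) then γ else -γ with hσ
      have hσ1 : ∑ j ∈ s, σ j = 0 := by
        rw [hσ]; split_ifs <;> simp [hγ1, Finset.sum_neg_distrib]
      have hσ2 : ∑ j ∈ s, σ j • z j = 0 := by
        rw [hσ]; split_ifs with h
        · exact hγ2
        · simp only [Pi.neg_apply, neg_smul, Finset.sum_neg_distrib, hγ2, neg_zero]
      have hσf : 0 ≤ ∑ j ∈ s, σ j * f (z j) := by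
        rw [hσ]; split_ifs with h
        · exact h
        · push_neg at h
          simp only [Pi.neg_apply, neg_mul, Finset.sum_neg_distrib]
          linarith
      have hσne : σ jne ≠ 0 := by
        rw [hσ]; split_ifs <;> simpa
      have hpos : ∃ j ∈ s, 0 < σ j := by
        by_contra hcon
        push_neg at hcon
        have hlt : ∑ j ∈ s, σ j < ∑ j ∈ s, (0:ℝ) :=
          Finset.sum_lt_sum hcon ⟨jne, hjne, lt_of_le_of_ne (hcon jne hjne) hσne⟩
        rw [Finset.sum_const_zero, hσ1] at hlt
        exact lt_irrefl _ hlt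
      set P := s.filter (fun j => 0 < σ j) with hP
      have hPne : P.Nonempty := by
        obtain ⟨j, hj, hjpos⟩ := hpos
        exact ⟨j, Finset.mem_filter.2 ⟨hj, hjpos⟩⟩
      set t := P.inf' hPne (fun j => β j / σ j) with htdef
      have ht0 : 0 ≤ t := by
        apply Finset.le_inf'
        intro j hj
        have hj' := Finset.mem_filter.1 hj
        exact div_nonneg (h0 j hj'.1).le hj'.2.le
      obtain ⟨j₀, hj₀P, hj₀t⟩ := Finset.exists_mem_eq_inf' hPne (fun j => β j / σ j)
      have hj₀s : j₀ ∈ s := (Finset.mem_filter.1 hj₀P).1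
      have hσj₀ : 0 < σ j₀ := (Finset.mem_filter.1 hj₀P).2
      set β' : ι → ℝ := fun j => β j - t * σ j with hβ'
      have hβ'0 : ∀ j ∈ s, 0 ≤ β' j := by
        intro j hj
        rw [hβ']
        dsimp only
        rcases lt_or_ge 0 (σ j) with hσj | hσj
        · have h5 : t ≤ β j / σ j := Finset.inf'_le _ (Finset.mem_filter.2 ⟨hj, hσj⟩)
          have h6 := (le_div_iff₀ hσj).1 h5
          linarith
        · nlinarith [(h0 j hj).le, mul_nonneg ht0 (neg_nonneg.2 hσj)]
      have hβ'j₀ : β' j₀ = 0 := by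
        show β j₀ - t * σ j₀ = 0
        rw [htdef.trans hj₀t, div_mul_cancel₀ _ (ne_of_gt hσj₀), sub_self]
      have hsum1 : ∑ j ∈ s, β' j = 1 := by
        rw [hβ']
        rw [Finset.sum_sub_distrib, ← Finset.mul_sum, hσ1, mul_zero, sub_zero, h1]
      have hsumz : ∑ j ∈ s, β' j • z j = ∑ j ∈ s, β j • z j := by
        rw [hβ']
        have h7 : ∀ j ∈ s, (β j - t * σ j) • z j = β j • z j - t • (σ j • z j) := by
          intro j _
          rw [sub_smul, smul_smul]
        rw [Finset.sum_congr rfl h7, Finset.sum_sub_distrib, ← Finset.smul_sum, hσ2,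
          smul_zero, sub_zero]
      have hsumf : ∑ j ∈ s, β' j * f (z j) ≤ ∑ j ∈ s, β j * f (z j) := by
        rw [hβ']
        have h8 : ∀ j ∈ s, (β j - t * σ j) * f (z j) = β j * f (z j) - t * (σ j * f (z j)) := by
          intro j _; ring
        rw [Finset.sum_congr rfl h8, Finset.sum_sub_distrib, ← Finset.mul_sum]
        nlinarith [mul_nonneg ht0 hσf]
      set s' := s.filter (fun j => β' j ≠ 0) with hs'
      have hs'sub : s' ⊆ s.erase j₀ := by
        intro j hj
        have hj' := Finset.mem_filter.1 hj
        exact Finset.mem_erase.2 ⟨fun hh => hj'.2 (hh ▸ hβ'j₀), hj'.1⟩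
      have hcard' : s'.card ≤ n := by
        have h1' := Finset.card_le_card hs'sub
        have h2' := Finset.card_erase_of_mem hj₀s
        omega
      have hez : ∑ j ∈ s', β' j • z j = ∑ j ∈ s, β' j • z j := by
        apply Finset.sum_subset (Finset.filter_subset _ _)
        intro j hj hj'
        have h9 : β' j = 0 := by
          by_contra hne
          exact hj' (Finset.mem_filter.2 ⟨hj, hne⟩)
        rw [h9, zero_smul]
      have hef : ∑ j ∈ s', β' j * f (z j) = ∑ j ∈ s, β' j * f (z j) := by
        apply Finset.sum_subset (Finset.filter_subset _ _)
        intro j hj hj'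
        have h9 : β' j = 0 := by
          by_contra hne
          exact hj' (Finset.mem_filter.2 ⟨hj, hne⟩)
        rw [h9, zero_mul]
      have he1 : ∑ j ∈ s', β' j = 1 := by
        rw [← hsum1]
        apply Finset.sum_subset (Finset.filter_subset _ _)
        intro j hj hj'
        by_contra hne
        exact hj' (Finset.mem_filter.2 ⟨hj, hne⟩)
      obtain ⟨r, hrmem, hrle⟩ := ih s' β' z hcard'
        (fun j hj => lt_of_le_of_ne (hβ'0 j ((Finset.filter_subset _ _) hj))
          (Ne.symm (Finset.mem_filter.1 hj).2)) he1
        (fun j hj => hz j ((Finset.filter_subset _ _) hj))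
      refine ⟨r, ?_, ?_⟩
      · rw [hez, hsumz] at hrmem
        exact hrmem
      · rw [hef] at hrle
        exact le_trans hrle hsumf

/-- Main reduction: any finite convex combination is dominated by a `d+1`-point one. -/
lemma exists_mem_convexifySet_le {ι : Type} (s : Finset ι) (β : ι → ℝ)
    (z : ι → EuclideanSpace ℝ (Fin d)) (h0 : ∀ j ∈ s, 0 ≤ β j) (h1 : ∑ j ∈ s, β j = 1)
    (hz : ∀ j ∈ s, z j ∈ X) :
    ∃ r ∈ convexifySet d X f (∑ j ∈ s, β j • z j), r ≤ ∑ j ∈ s, β j * f (z j) := by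
  classical
  set s₀ := s.filter (fun j => β j ≠ 0) with hs₀
  have hzsum : ∑ j ∈ s₀, β j • z j = ∑ j ∈ s, β j • z j := by
    apply Finset.sum_subset (Finset.filter_subset _ _)
    intro j hj hj'
    have h9 : β j = 0 := by
      by_contra hne; exact hj' (Finset.mem_filter.2 ⟨hj, hne⟩)
    rw [h9, zero_smul]
  have hfsum : ∑ j ∈ s₀, β j * f (z j) = ∑ j ∈ s, β j * f (z j) := by
    apply Finset.sum_subset (Finset.filter_subset _ _)
    intro j hj hj'
    have h9 : β j = 0 := by
      by_contra hne; exact hj' (Finset.mem_filter.2 ⟨hj, hne⟩)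
    rw [h9, zero_mul]
  have h1' : ∑ j ∈ s₀, β j = 1 := by
    rw [← h1]
    apply Finset.sum_subset (Finset.filter_subset _ _)
    intro j hj hj'
    by_contra hne; exact hj' (Finset.mem_filter.2 ⟨hj, hne⟩)
  obtain ⟨r, hr, hrle⟩ := reduce_aux s₀.card s₀ β z le_rfl
    (fun j hj => lt_of_le_of_ne (h0 j ((Finset.filter_subset _ _) hj))
      (Ne.symm (Finset.mem_filter.1 hj).2)) h1'
    (fun j hj => hz j ((Finset.filter_subset _ _) hj))
  exact ⟨r, hzsum ▸ hr, hfsum ▸ hrle⟩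

lemma convexifySet_nonempty {x : EuclideanSpace ℝ (Fin d)} (hx : x ∈ convexHull ℝ X) :
    (convexifySet d X f x).Nonempty := by
  rw [_root_.convexHull_eq] at hx
  obtain ⟨ι, t, w, zz, h0, h1, hz, hcm⟩ := hx
  obtain ⟨r, hr, _⟩ := exists_mem_convexifySet_le t w zz h0 h1 hz
  refine ⟨r, ?_⟩
  rwa [← Finset.centerMass_eq_of_sum_1 _ _ h1, hcm] at hr

lemma convexifySet_bdd {m : ℝ} (hm : ∀ y ∈ X, m ≤ f y) (x : EuclideanSpace ℝ (Fin d)) :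
    ∀ r ∈ convexifySet d X f x, m ≤ r := by
  rintro r ⟨α, z, h0, h1, hz, hsum, rfl⟩
  have h2 : ∀ k, α k * m ≤ α k * f (z k) :=
    fun k => mul_le_mul_of_nonneg_left (hm _ (hz k)) (h0 k)
  calc m = (∑ k, α k) * m := by rw [h1, one_mul]
  _ = ∑ k, α k * m := by rw [Finset.sum_mul]
  _ ≤ ∑ k, α k * f (z k) := Finset.sum_le_sum (fun k _ => h2 k)

def goodSet (d : ℕ) (X : Set (EuclideanSpace ℝ (Fin d))) :
    Set ((Fin (d+1) → ℝ) × (Fin (d+1) → EuclideanSpace ℝ (Fin d))) :=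
  stdSimplex ℝ (Fin (d+1)) ×ˢ Set.pi Set.univ (fun _ => X)

lemma mem_goodSet {p : (Fin (d+1) → ℝ) × (Fin (d+1) → EuclideanSpace ℝ (Fin d))} :
    p ∈ goodSet d X ↔ (∀ k, 0 ≤ p.1 k) ∧ (∑ k, p.1 k = 1) ∧ (∀ k, p.2 k ∈ X) := by
  simp [goodSet, Set.mem_prod, stdSimplex, Set.mem_pi, and_assoc]

lemma goodSet_isCompact (hX : IsCompact X) : IsCompact (goodSet d X) :=
  (isCompact_stdSimplex (𝕜 := ℝ) (ι := Fin (d+1))).prod (isCompact_univ_pi fun _ => hX)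

lemma comb_continuous :
    Continuous (fun p : (Fin (d+1) → ℝ) × (Fin (d+1) → EuclideanSpace ℝ (Fin d)) =>
      ∑ k, p.1 k • p.2 k) :=
  continuous_finset_sum _ fun k _ =>
    (((continuous_apply k).comp continuous_fst).smul ((continuous_apply k).comp continuous_snd))

lemma convexHull_eq_image :
    convexHull ℝ X = (fun p : (Fin (d+1) → ℝ) × (Fin (d+1) → EuclideanSpace ℝ (Fin d)) =>
      ∑ k, p.1 k • p.2 k) '' (goodSet d X) := by
  apply Set.Subset.antisymm
  · intro x hx
    obtain ⟨r, α, z, h0, h1, hz, hsum, _⟩ := convexifySet_nonempty (f := fun _ => (0:ℝ)) hx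
    exact ⟨(α, z), mem_goodSet.2 ⟨h0, h1, hz⟩, hsum⟩
  · rintro x ⟨p, hp, rfl⟩
    exact Convex.sum_mem (convex_convexHull ℝ X) (fun k _ => (mem_goodSet.1 hp).1 k)
      (mem_goodSet.1 hp).2.1 (fun k _ => subset_convexHull ℝ X ((mem_goodSet.1 hp).2.2 k))

lemma convexHull_isCompact (hX : IsCompact X) : IsCompact (convexHull ℝ X) := by
  rw [convexHull_eq_image]
  exact (goodSet_isCompact hX).image comb_continuous

lemma g_lsc {m : ℝ} (hf : LowerSemicontinuousOn f X) (hm : ∀ y ∈ X, m ≤ f y) :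
    LowerSemicontinuousOn (fun p : (Fin (d+1) → ℝ) × (Fin (d+1) → EuclideanSpace ℝ (Fin d)) =>
      ∑ k, p.1 k * f (p.2 k)) (goodSet d X) := by
  have heq : (fun p : (Fin (d+1) → ℝ) × (Fin (d+1) → EuclideanSpace ℝ (Fin d)) =>
      ∑ k, p.1 k * f (p.2 k))
      = fun p => ∑ k, (p.1 k * (f (p.2 k) + -m) + p.1 k * m) := by
    funext p; exact Finset.sum_congr rfl (fun k _ => by ring)
  rw [heq]
  apply lowerSemicontinuousOn_sum
  intro k _
  apply LowerSemicontinuousOn.add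
  · apply lsc_mul_nonneg
    · exact ((continuous_apply k).comp continuous_fst).continuousOn
    · intro p hp; exact (mem_goodSet.1 hp).1 k
    · exact (lsc_comp_proj hf ((continuous_apply k).comp continuous_snd)
        (fun p hp => (mem_goodSet.1 hp).2.2 k)).add
        (continuousOn_const (c := -m)).lowerSemicontinuousOn
    · intro p hp
      have := hm _ ((mem_goodSet.1 hp).2.2 k)
      linarith
  · exact (((continuous_apply k).comp continuous_fst).mul
      continuous_const).continuousOn.lowerSemicontinuousOn

lemma convexify_attained (hX : IsCompact X) (hf : LowerSemicontinuousOn f X) {m : ℝ}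
    (hm : ∀ y ∈ X, m ≤ f y) {x : EuclideanSpace ℝ (Fin d)}
    (hne : (convexifySet d X f x).Nonempty) :
    ∃ p ∈ goodSet d X, (∑ k, p.1 k • p.2 k = x) ∧
      convexify d X f x = ∑ k, p.1 k * f (p.2 k) := by
  set K := goodSet d X ∩ {p | ∑ k, p.1 k • p.2 k = x} with hK
  have hKcomp : IsCompact K :=
    (goodSet_isCompact hX).inter_right (isClosed_singleton.preimage comb_continuous)
  have hKne : K.Nonempty := by
    obtain ⟨r, α, z, h0, h1, hz, hsum, _⟩ := hne
    exact ⟨(α, z), mem_goodSet.2 ⟨h0, h1, hz⟩, hsum⟩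
  have hg : LowerSemicontinuousOn
      (fun p : (Fin (d+1) → ℝ) × (Fin (d+1) → EuclideanSpace ℝ (Fin d)) =>
        ∑ k, p.1 k * f (p.2 k)) K :=
    (g_lsc hf hm).mono Set.inter_subset_left
  obtain ⟨p₀, hp₀K, hp₀min⟩ := lsc_exists_min hKcomp hKne hg
  refine ⟨p₀, hp₀K.1, hp₀K.2, le_antisymm ?_ ?_⟩
  · exact csInf_le ⟨m, fun r hr => convexifySet_bdd hm x r hr⟩
      ⟨p₀.1, p₀.2, (mem_goodSet.1 hp₀K.1).1, (mem_goodSet.1 hp₀K.1).2.1,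
        (mem_goodSet.1 hp₀K.1).2.2, hp₀K.2, rfl⟩
  · apply le_csInf hne
    rintro r ⟨α, z, h0, h1, hz, hsum, rfl⟩
    exact hp₀min (α, z) ⟨mem_goodSet.2 ⟨h0, h1, hz⟩, hsum⟩

lemma epi_isClosed (hX : IsCompact X) (hf : LowerSemicontinuousOn f X) {m : ℝ}
    (hm : ∀ y ∈ X, m ≤ f y) :
    IsClosed {p : EuclideanSpace ℝ (Fin d) × ℝ |
      p.1 ∈ convexHull ℝ X ∧ convexify d X f p.1 ≤ p.2} := by
  apply IsSeqClosed.isClosed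
  intro u q hu hq
  have hq1 : Filter.Tendsto (fun n => (u n).1) Filter.atTop (nhds q.1) :=
    (continuous_fst.tendsto q).comp hq
  have hq2 : Filter.Tendsto (fun n => (u n).2) Filter.atTop (nhds q.2) :=
    (continuous_snd.tendsto q).comp hq
  have hXcl : IsClosed (convexHull ℝ X) := (convexHull_isCompact hX).isClosed
  have hqX : q.1 ∈ convexHull ℝ X :=
    hXcl.mem_of_tendsto hq1 (Filter.Eventually.of_forall fun n => (hu n).1)
  choose p hpA hpsum hpval using fun n =>
    convexify_attained hX hf hm (convexifySet_nonempty (f := f) (hu n).1)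
  obtain ⟨P, hPA, φ, hφ, hPt⟩ := (goodSet_isCompact hX).tendsto_subseq hpA
  have hPin : Filter.Tendsto (p ∘ φ) Filter.atTop (nhdsWithin P (goodSet d X)) :=
    tendsto_nhdsWithin_iff.2 ⟨hPt, Filter.Eventually.of_forall fun n => hpA (φ n)⟩
  have hsum : ∑ k, P.1 k • P.2 k = q.1 := by
    have h1 : Filter.Tendsto (fun n => ∑ k, (p (φ n)).1 k • (p (φ n)).2 k) Filter.atTop
        (nhds (∑ k, P.1 k • P.2 k)) := (comb_continuous.tendsto P).comp hPt
    have h2 : Filter.Tendsto (fun n => ∑ k, (p (φ n)).1 k • (p (φ n)).2 k) Filter.atTop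
        (nhds q.1) := by
      have := hq1.comp hφ.tendsto_atTop
      simpa [Function.comp_def, hpsum] using this
    exact tendsto_nhds_unique h1 h2
  refine ⟨hqX, ?_⟩
  have hmem : (∑ k, P.1 k * f (P.2 k)) ∈ convexifySet d X f q.1 :=
    ⟨P.1, P.2, (mem_goodSet.1 hPA).1, (mem_goodSet.1 hPA).2.1,
      (mem_goodSet.1 hPA).2.2, hsum, rfl⟩
  have hle : convexify d X f q.1 ≤ ∑ k, P.1 k * f (P.2 k) :=
    csInf_le ⟨m, fun r hr => convexifySet_bdd hm q.1 r hr⟩ hmem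
  by_contra hcon
  push_neg at hcon
  have hq2lt : q.2 < ∑ k, P.1 k * f (P.2 k) := lt_of_lt_of_le hcon hle
  obtain ⟨y, hy1, hy2⟩ := exists_between hq2lt
  have hev : ∀ᶠ n in Filter.atTop, y < ∑ k, (p (φ n)).1 k * f ((p (φ n)).2 k) :=
    hPin.eventually ((g_lsc hf hm) P hPA y hy2)
  have hev2 : ∀ᶠ n in Filter.atTop, y ≤ (u (φ n)).2 := by
    filter_upwards [hev] with n hn
    have h3 : convexify d X f (u (φ n)).1 = ∑ k, (p (φ n)).1 k * f ((p (φ n)).2 k) :=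
      hpval (φ n)
    have h4 := (hu (φ n)).2
    rw [h3] at h4
    exact le_trans hn.le h4
  have hlim : y ≤ q.2 := ge_of_tendsto (hq2.comp hφ.tendsto_atTop) hev2
  linarith

end Main

/-- The convexification `f̃` is convex and l.s.c. on `conv(X)`, and its epigraph
is the closure of the convex hull of the epigraph of `f`. -/
theorem convexification_convex_lsc_epi (d : ℕ) (X : Set (EuclideanSpace ℝ (Fin d)))
    (hX : IsCompact X) (f : EuclideanSpace ℝ (Fin d) → ℝ)
    (hf : LowerSemicontinuousOn f X) :
    ConvexOn ℝ (convexHull ℝ X) (convexify d X f) ∧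
    LowerSemicontinuousOn (convexify d X f) (convexHull ℝ X) ∧
    {p : EuclideanSpace ℝ (Fin d) × ℝ | p.1 ∈ convexHull ℝ X ∧ convexify d X f p.1 ≤ p.2}
      = closure (convexHull ℝ {p : EuclideanSpace ℝ (Fin d) × ℝ | p.1 ∈ X ∧ f p.1 ≤ p.2}) := by
  classical
  rcases X.eq_empty_or_nonempty with rfl | hXne
  · refine ⟨⟨by rw [convexHull_empty]; exact convex_empty, ?_⟩, ?_, ?_⟩
    · intro x hx
      rw [convexHull_empty] at hx
      exact absurd hx (Set.notMem_empty x)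
    · intro x hx
      rw [convexHull_empty] at hx
      exact absurd hx (Set.notMem_empty x)
    · have h1 : {p : EuclideanSpace ℝ (Fin d) × ℝ | p.1 ∈ (∅ : Set _) ∧ f p.1 ≤ p.2} = ∅ := by
        ext p; simp
      rw [convexHull_empty, h1, convexHull_empty, closure_empty]
      ext p; simp
  · obtain ⟨xm, hxmX, hm⟩ := lsc_exists_min hX hXne hf
    set m := f xm with hmdef
    set S := {p : EuclideanSpace ℝ (Fin d) × ℝ |
      p.1 ∈ convexHull ℝ X ∧ convexify d X f p.1 ≤ p.2} with hSdef
    set E := {p : EuclideanSpace ℝ (Fin d) × ℝ | p.1 ∈ X ∧ f p.1 ≤ p.2} with hEdef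
    have hScl : IsClosed S := epi_isClosed hX hf hm
    -- inclusion 2 : convexHull E ⊆ S
    have hincl2 : convexHull ℝ E ⊆ S := by
      intro pt hpt
      rw [_root_.convexHull_eq] at hpt
      obtain ⟨ι, t, w, zz, h0, h1, hz, hcm⟩ := hpt
      rw [Finset.centerMass_eq_of_sum_1 _ _ h1] at hcm
      have hfst : pt.1 = ∑ j ∈ t, w j • (zz j).1 := by
        rw [← hcm, Prod.fst_sum]
        exact Finset.sum_congr rfl fun j _ => rfl
      have hsnd : pt.2 = ∑ j ∈ t, w j * (zz j).2 := by
        rw [← hcm, Prod.snd_sum]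
        exact Finset.sum_congr rfl fun j _ => rfl
      have hmemX : pt.1 ∈ convexHull ℝ X := by
        rw [hfst]
        exact Convex.sum_mem (convex_convexHull ℝ X) h0 h1
          (fun j hj => subset_convexHull ℝ X (hz j hj).1)
      obtain ⟨r, hr, hrle⟩ := exists_mem_convexifySet_le (f := f) t w (fun j => (zz j).1) h0 h1
        (fun j hj => (hz j hj).1)
      refine ⟨hmemX, ?_⟩
      have hcle : convexify d X f pt.1 ≤ r := by
        rw [hfst]
        exact csInf_le ⟨m, fun r' hr' => convexifySet_bdd hm _ r' hr'⟩ hr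
      have hfin : ∑ j ∈ t, w j * f ((zz j).1) ≤ pt.2 := by
        rw [hsnd]
        exact Finset.sum_le_sum fun j hj =>
          mul_le_mul_of_nonneg_left (hz j hj).2 (h0 j hj)
      exact le_trans hcle (le_trans hrle hfin)
    -- inclusion 1 : S ⊆ closure (convexHull E)
    have hincl1 : S ⊆ closure (convexHull ℝ E) := by
      rintro ⟨x, t⟩ ⟨hx, ht⟩
      have hseq : ∀ n : ℕ, (x, t + 1 / ((n:ℝ) + 1)) ∈ convexHull ℝ E := by
        intro n
        have hpos : (0:ℝ) < 1 / ((n:ℝ) + 1) := by positivity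
        have hlt : sInf (convexifySet d X f x) < t + 1 / ((n:ℝ) + 1) := by
          have : convexify d X f x ≤ t := ht
          rw [convexify] at this
          linarith
        obtain ⟨r, hr, hrlt⟩ := exists_lt_of_csInf_lt (convexifySet_nonempty (f := f) hx) hlt
        obtain ⟨α, z, h0, h1, hz, hsum, rfl⟩ := hr
        set c := t + 1 / ((n:ℝ) + 1) - ∑ k, α k * f (z k) with hcdef
        have hc0 : 0 ≤ c := by rw [hcdef]; linarith
        have hq : ∀ k, (z k, f (z k) + c) ∈ E := fun k => ⟨hz k, show f (z k) ≤ f (z k) + c by linarith⟩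
        have heq : (x, t + 1 / ((n:ℝ) + 1)) = ∑ k, α k • (z k, f (z k) + c) := by
          apply Prod.ext
          · rw [Prod.fst_sum]
            simp only [Prod.smul_fst]
            exact hsum.symm
          · rw [Prod.snd_sum]
            simp only [Prod.smul_snd, smul_eq_mul]
            have : ∑ k, α k * (f (z k) + c) = (∑ k, α k * f (z k)) + (∑ k, α k) * c := by
              rw [Finset.sum_mul]
              rw [← Finset.sum_add_distrib]
              exact Finset.sum_congr rfl fun k _ => by ring
            rw [this, h1, one_mul, hcdef]
            ring
        rw [heq]
        exact Convex.sum_mem (convex_convexHull ℝ E) (fun k _ => h0 k) h1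
          (fun k _ => subset_convexHull ℝ E (hq k))
      have htend : Filter.Tendsto (fun n : ℕ => ((x, t + 1 / ((n:ℝ) + 1)) :
          EuclideanSpace ℝ (Fin d) × ℝ)) Filter.atTop (nhds (x, t)) := by
        apply Filter.Tendsto.prodMk_nhds tendsto_const_nhds
        have hphi : Filter.Tendsto (fun n : ℕ => (n : ℝ) + 1) Filter.atTop Filter.atTop :=
          Filter.tendsto_atTop_add_const_right _ 1 tendsto_natCast_atTop_atTop
        have h2 : Filter.Tendsto (fun n : ℕ => t + 1 / ((n:ℝ) + 1)) Filter.atTop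
            (nhds (t + 0)) := by
          apply Filter.Tendsto.const_add
          simpa [one_div, Function.comp_def] using tendsto_inv_atTop_zero.comp hphi
        rwa [add_zero] at h2
      exact mem_closure_of_tendsto htend (Filter.Eventually.of_forall hseq)
    have hmain : S = closure (convexHull ℝ E) :=
      Set.Subset.antisymm hincl1 (closure_minimal hincl2 hScl)
    refine ⟨?_, ?_, hmain⟩
    · rw [convexOn_iff_convex_epigraph]
      have : {p : EuclideanSpace ℝ (Fin d) × ℝ |
          p.1 ∈ convexHull ℝ X ∧ convexify d X f p.1 ≤ p.2} = closure (convexHull ℝ E) := hmain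
      rw [this]
      exact (convex_convexHull ℝ E).closure
    · intro x hx y hy
      have hnotin : (x, y) ∉ S := fun hmem => absurd hmem.2 (not_le.2 hy)
      have hopen : IsOpen {x' : EuclideanSpace ℝ (Fin d) | (x', y) ∉ S} := by
        have : {x' : EuclideanSpace ℝ (Fin d) | (x', y) ∉ S}
            = (fun x' : EuclideanSpace ℝ (Fin d) => ((x', y) :
                EuclideanSpace ℝ (Fin d) × ℝ)) ⁻¹' Sᶜ := rfl
        rw [this]
        exact (hScl.isOpen_compl).preimage (continuous_id.prodMk continuous_const)
      have hxin : x ∈ {x' : EuclideanSpace ℝ (Fin d) | (x', y) ∉ S} := hnotin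
      filter_upwards [mem_nhdsWithin_of_mem_nhds (hopen.mem_nhds hxin), self_mem_nhdsWithin]
        with x' hx' hx'X
      by_contra hcon
      push_neg at hcon
      exact hx' ⟨hx'X, hcon⟩
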